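/- The intermediate series module V(α,β,F) over the Heisenberg–Virasoro algebra is reducible if and only if F = 0, α ∈ ℤ, and β ∈ {0,1}. -/

import Mathlib

/-- Basis of the Heisenberg–Virasoro Lie algebra. -/
inductive HVBasis : Type
  | d : ℤ → HVBasis
  | i : ℤ → HVBasis
  | c : HVBasis
  | cd : HVBasis
  | ci : HVBasis

/-- The underlying vector space: formal ℂ-linear combinations of the basis. -/
abbrev HV : Type := HVBasis →₀ ℂ

/-- Basis vectors. -/
noncomputable def e (x : HVBasis) : HV := Finsupp.single x 1

/-- The bracket on basis elements. -/
noncomputable def bb : HVBasis → HVBasis → HV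
  | .d n, .d m => ((m : ℂ) - (n : ℂ)) • e (.d (n + m)) +
      (if n = -m then ((n ^ 3 - n : ℤ) : ℂ) / 12 else 0) • e .c
  | .d n, .i m => (m : ℂ) • e (.i (m + n)) +
      (if n = -m then ((n ^ 2 + n : ℤ) : ℂ) else 0) • e .cd
  | .i n, .d m => -((n : ℂ) • e (.i (n + m)) +
      (if m = -n then ((m ^ 2 + m : ℤ) : ℂ) else 0) • e .cd)
  | .i n, .i m => (if n = -m then (n : ℂ) else 0) • e .ci
  | _, _ => 0

/-- The bracket extended bilinearly to all of HV. -/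
noncomputable def br (x y : HV) : HV :=
  x.sum fun i a => y.sum fun j b => (a * b) • bb i j


/-- Action of the basis elements of HV on the vector space with basis
`{v_{α+k} : k ∈ ℤ}` (a basis vector `v_{α+k}` is `Finsupp.single k 1`). -/
noncomputable def actB (α β F : ℂ) : HVBasis → (ℤ →₀ ℂ) → (ℤ →₀ ℂ)
  | .d i, v => v.sum fun k c => (c * (α + (k : ℂ) + β * (i : ℂ))) • Finsupp.single (k + i) (1 : ℂ)
  | .i i, v => v.sum fun k c => (c * F) • Finsupp.single (k + i) (1 : ℂ)
  | _, _ => 0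

/-- The induced action of HV. -/
noncomputable def ρ (α β F : ℂ) (x : HV) (v : ℤ →₀ ℂ) : ℤ →₀ ℂ :=
  x.sum fun i a => a • actB α β F i v


lemma sum_single_shift_apply (v : ℤ →₀ ℂ) (i m : ℤ) (g : ℤ → ℂ → ℂ) (hg : g (m - i) 0 = 0) :
    (v.sum fun k c => g k c • Finsupp.single (k + i) (1 : ℂ)) m = g (m - i) (v (m - i)) := by
  rw [Finsupp.sum_apply, Finsupp.sum]
  rw [Finset.sum_congr rfl (fun k _ => ?_ : ∀ k ∈ v.support,
    (g k (v k) • Finsupp.single (k + i) (1 : ℂ)) m = if k = m - i then g k (v k) else 0)]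
  · rw [Finset.sum_ite_eq' v.support (m - i) (fun k => g k (v k))]
    by_cases h : m - i ∈ v.support
    · rw [if_pos h]
    · rw [if_neg h, Finsupp.notMem_support_iff.mp h, hg]
  · rw [Finsupp.smul_apply, Finsupp.single_apply, smul_eq_mul]
    by_cases h : k + i = m
    · rw [if_pos h, if_pos (by omega), mul_one]
    · rw [if_neg h, if_neg (by omega), mul_zero]

lemma rho_e (α β F : ℂ) (x : HVBasis) (v : ℤ →₀ ℂ) :
    ρ α β F (e x) v = actB α β F x v := by
  unfold ρ e
  rw [Finsupp.sum_single_index (by rw [zero_smul]), one_smul]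

lemma actB_d_apply (α β F : ℂ) (i m : ℤ) (v : ℤ →₀ ℂ) :
    actB α β F (.d i) v m = v (m - i) * (α + ((m : ℂ) - (i : ℂ)) + β * i) := by
  show (v.sum fun k c => (c * (α + (k : ℂ) + β * (i : ℂ))) • Finsupp.single (k + i) (1 : ℂ)) m = _
  rw [sum_single_shift_apply v i m _ (by ring)]
  push_cast
  ring

lemma actB_i_apply (α β F : ℂ) (i m : ℤ) (v : ℤ →₀ ℂ) :
    actB α β F (.i i) v m = v (m - i) * F := by
  show (v.sum fun k c => (c * F) • Finsupp.single (k + i) (1 : ℂ)) m = _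
  rw [sum_single_shift_apply v i m _ (by ring)]

lemma actB_d_single (α β F : ℂ) (i k : ℤ) (c : ℂ) :
    actB α β F (.d i) (Finsupp.single k c) =
      (c * (α + (k : ℂ) + β * (i : ℂ))) • Finsupp.single (k + i) (1 : ℂ) := by
  show (Finsupp.single k c).sum (fun k c => (c * (α + (k : ℂ) + β * (i : ℂ))) •
      Finsupp.single (k + i) (1 : ℂ)) = _
  rw [Finsupp.sum_single_index (by rw [zero_mul, zero_smul])]

lemma actB_i_single (α β F : ℂ) (i k : ℤ) (c : ℂ) :
    actB α β F (.i i) (Finsupp.single k c) = (c * F) • Finsupp.single (k + i) (1 : ℂ) := by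
  show (Finsupp.single k c).sum (fun k c => (c * F) • Finsupp.single (k + i) (1 : ℂ)) = _
  rw [Finsupp.sum_single_index (by rw [zero_mul, zero_smul])]

section Fwd
variable {α β F : ℂ} {W : Submodule ℂ (ℤ →₀ ℂ)}
  (hinv : ∀ (x : HV), ∀ v ∈ W, ρ α β F x v ∈ W)

include hinv

lemma step_d {k : ℤ} (i : ℤ) (hk : Finsupp.single k (1 : ℂ) ∈ W)
    (h : α + (k : ℂ) + β * (i : ℂ) ≠ 0) : Finsupp.single (k + i) (1 : ℂ) ∈ W := by
  have h1 := hinv (e (.d i)) _ hk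
  rw [rho_e, actB_d_single, one_mul] at h1
  have := W.smul_mem (α + (k : ℂ) + β * (i : ℂ))⁻¹ h1
  rwa [inv_smul_smul₀ h] at this

lemma step_i {k : ℤ} (i : ℤ) (hk : Finsupp.single k (1 : ℂ) ∈ W) (hF : F ≠ 0) :
    Finsupp.single (k + i) (1 : ℂ) ∈ W := by
  have h1 := hinv (e (.i i)) _ hk
  rw [rho_e, actB_i_single, one_mul] at h1
  have := W.smul_mem F⁻¹ h1
  rwa [inv_smul_smul₀ hF] at this

lemma extract : ∀ n : ℕ, ∀ v : ℤ →₀ ℂ, v.support.card = n → v ∈ W →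
    ∀ k, v k ≠ 0 → Finsupp.single k (1 : ℂ) ∈ W := by
  intro n
  induction n using Nat.strong_induction_on with
  | _ n ih =>
    intro v hcard hv k hk
    by_cases hs : v.support = {k}
    · obtain ⟨h1, h2⟩ := Finsupp.support_eq_singleton.mp hs
      have : Finsupp.single k (1 : ℂ) = (v k)⁻¹ • Finsupp.single k (v k) := by
        rw [Finsupp.smul_single, smul_eq_mul, inv_mul_cancel₀ h1]
      rw [this, ← h2]; exact W.smul_mem _ hv
    · have hkmem : k ∈ v.support := Finsupp.mem_support_iff.mpr hk
      obtain ⟨k', hk'mem, hk'ne⟩ : ∃ k' ∈ v.support, k' ≠ k := by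
        by_contra hcon
        push_neg at hcon
        exact hs (Finset.eq_singleton_iff_unique_mem.mpr ⟨hkmem, fun x hx => hcon x hx⟩)
      set w : ℤ →₀ ℂ := ρ α β F (e (.d 0)) v - (α + (k' : ℂ)) • v with hw
      have hwapp : ∀ m : ℤ, w m = v m * ((m : ℂ) - (k' : ℂ)) := by
        intro m
        rw [hw, Finsupp.sub_apply, Finsupp.smul_apply, rho_e, actB_d_apply, smul_eq_mul]
        push_cast
        ring
      have hwW : w ∈ W := W.sub_mem (hinv _ _ hv) (W.smul_mem _ hv)
      have hwk : w k ≠ 0 := by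
        rw [hwapp]
        refine mul_ne_zero hk ?_
        intro hc
        have : ((k' : ℂ)) = ((k : ℂ)) := by linear_combination -hc
        exact hk'ne (by exact_mod_cast this)
      have hsub : w.support ⊆ v.support.erase k' := by
        intro m hm
        rw [Finsupp.mem_support_iff, hwapp] at hm
        refine Finset.mem_erase.mpr ⟨?_, Finsupp.mem_support_iff.mpr fun h0 => hm (by rw [h0, zero_mul])⟩
        rintro rfl
        exact hm (by ring)
      have hlt : w.support.card < n := by
        calc w.support.card ≤ (v.support.erase k').card := Finset.card_le_card hsub
        _ < v.support.card := Finset.card_erase_lt_of_mem hk'mem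
        _ = n := hcard
      exact ih _ hlt w rfl hwW k hwk

end Fwd

lemma all_singles_top {W : Submodule ℂ (ℤ →₀ ℂ)}
    (h : ∀ k : ℤ, Finsupp.single k (1 : ℂ) ∈ W) : W = ⊤ := by
  rw [eq_top_iff]
  intro v _
  rw [← Finsupp.sum_single v, Finsupp.sum]
  refine Submodule.sum_mem W fun k _ => ?_
  rw [show Finsupp.single k (v k) = (v k) • Finsupp.single k (1 : ℂ) by
    rw [Finsupp.smul_single, smul_eq_mul, mul_one]]
  exact W.smul_mem _ (h k)

-- Reverse direction, β = 0 case: everything acts as zero on span of v_{-n}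
lemma actB_zero_on (n : ℤ) (j : HVBasis) (c : ℂ) :
    actB (n : ℂ) 0 0 j (Finsupp.single (-n) c) = 0 := by
  cases j with
  | d i => rw [actB_d_single]; push_cast; ring_nf; rw [zero_smul]
  | i i => rw [actB_i_single]; rw [mul_zero, zero_smul]
  | c => rfl
  | cd => rfl
  | ci => rfl


/-- The intermediate series module `V(α,β,F)` is reducible (has a nonzero proper
invariant subspace) if and only if `F = 0`, `α ∈ ℤ`, and `β ∈ {0,1}`. -/
theorem stmt4 (α β F : ℂ) :
    (∃ W : Submodule ℂ (ℤ →₀ ℂ), W ≠ ⊥ ∧ W ≠ ⊤ ∧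
        ∀ (x : HV), ∀ v ∈ W, ρ α β F x v ∈ W)
      ↔ (F = 0 ∧ (∃ n : ℤ, α = (n : ℂ)) ∧ (β = 0 ∨ β = 1)) := by
  constructor
  · rintro ⟨W, hbot, htop, hinv⟩
    obtain ⟨v, hvW, hv0⟩ := Submodule.ne_bot_iff W |>.mp hbot
    obtain ⟨k0, hk0v⟩ : ∃ k, v k ≠ 0 := by
      by_contra hcon; push_neg at hcon
      exact hv0 (Finsupp.ext hcon)
    have hk0 : Finsupp.single k0 (1 : ℂ) ∈ W := extract hinv _ v rfl hvW k0 hk0v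
    obtain ⟨m, hm⟩ : ∃ m, Finsupp.single m (1 : ℂ) ∉ W := by
      by_contra hcon; push_neg at hcon
      exact htop (all_singles_top hcon)
    have hF : F = 0 := by
      by_contra hF
      exact hm (by simpa using step_i hinv (m - k0) hk0 hF)
    have key : ∀ k m : ℤ, Finsupp.single k (1 : ℂ) ∈ W → Finsupp.single m (1 : ℂ) ∉ W →
        α + (k : ℂ) + β * ((m : ℂ) - (k : ℂ)) = 0 := by
      intro k m hkW hmW
      by_contra hne
      refine hmW ?_
      have := step_d hinv (m - k) hkW (by push_cast; exact hne)
      simpa using this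
    by_cases hone : ∃ k', k' ≠ k0 ∧ Finsupp.single k' (1 : ℂ) ∈ W
    · obtain ⟨k', hne, hk'⟩ := hone
      have e1 := key k0 m hk0 hm
      have e2 := key k' m hk' hm
      have hkk : ((k' : ℂ)) ≠ ((k0 : ℂ)) := by exact_mod_cast hne
      have hβ : β = 1 := by
        have h3 : (1 - β) * ((k0 : ℂ) - k') = 0 := by linear_combination e1 - e2
        rcases mul_eq_zero.mp h3 with h | h
        · linear_combination -h
        · exact absurd (by linear_combination -h) hkk
      refine ⟨hF, ⟨-m, ?_⟩, Or.inr hβ⟩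
      push_cast
      linear_combination e1 - ((m : ℂ) - (k0 : ℂ)) * hβ
    · push_neg at hone
      have e1 := key k0 (k0 + 1) hk0 (hone _ (by omega))
      have e2 := key k0 (k0 + 2) hk0 (hone _ (by omega))
      push_cast at e1 e2
      have hβ : β = 0 := by linear_combination e2 - e1
      exact ⟨hF, ⟨-k0, by push_cast; linear_combination e1 - hβ⟩, Or.inl hβ⟩
  · rintro ⟨hF, ⟨n, hα⟩, hβ⟩
    subst hF hα
    rcases hβ with hβ | hβ
    · subst hβ
      refine ⟨Submodule.span ℂ {Finsupp.single (-n) (1 : ℂ)}, ?_, ?_, ?_⟩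
      · rw [Submodule.ne_bot_iff]
        exact ⟨_, Submodule.mem_span_singleton_self _, fun h => one_ne_zero (Finsupp.single_eq_zero.mp h)⟩
      · intro hcon
        have : Finsupp.single (1 - n) (1 : ℂ) ∈ Submodule.span ℂ {Finsupp.single (-n) (1 : ℂ)} := by
          rw [hcon]; trivial
        obtain ⟨c, hc⟩ := Submodule.mem_span_singleton.mp this
        have := congrArg (fun f : ℤ →₀ ℂ => f (1 - n)) hc
        simp [Finsupp.single_apply, show ¬ (-n = 1 - n) by omega] at this
      · intro x v hv
        obtain ⟨c, hc⟩ := Submodule.mem_span_singleton.mp hv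
        rw [← hc]
        have hv' : c • Finsupp.single (-n) (1 : ℂ) = Finsupp.single (-n) c := by
          rw [Finsupp.smul_single, smul_eq_mul, mul_one]
        rw [hv']
        have : ρ (n : ℂ) 0 0 x (Finsupp.single (-n) c) = 0 := by
          unfold ρ
          have h2 : (Finsupp.sum x fun j a => a • actB (n : ℂ) 0 0 j (Finsupp.single (-n) c))
              = Finsupp.sum x (fun _ _ => (0 : ℤ →₀ ℂ)) :=
            Finsupp.sum_congr (fun j _ => by rw [actB_zero_on, smul_zero])
          rw [h2, Finsupp.sum_fun_zero]
        rw [this]; exact Submodule.zero_mem _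
    · subst hβ
      refine ⟨LinearMap.ker (Finsupp.lapply (-n) : (ℤ →₀ ℂ) →ₗ[ℂ] ℂ), ?_, ?_, ?_⟩
      · rw [Submodule.ne_bot_iff]
        refine ⟨Finsupp.single (1 - n) (1 : ℂ), ?_, fun h => one_ne_zero (Finsupp.single_eq_zero.mp h)⟩
        rw [LinearMap.mem_ker]
        simp [Finsupp.lapply, Finsupp.single_apply, show ¬ (1 - n = -n) by omega]
      · intro hcon
        have : Finsupp.single (-n) (1 : ℂ) ∈ LinearMap.ker (Finsupp.lapply (-n) : (ℤ →₀ ℂ) →ₗ[ℂ] ℂ) := by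
          rw [hcon]; trivial
        rw [LinearMap.mem_ker] at this
        simp [Finsupp.lapply, Finsupp.single_apply] at this
      · intro x v hv
        rw [LinearMap.mem_ker]
        show ρ (n : ℂ) 1 0 x v (-n) = 0
        unfold ρ
        rw [Finsupp.sum_apply]
        have h2 : (Finsupp.sum x fun j b => (b • actB (n : ℂ) 1 0 j v) (-n))
            = Finsupp.sum x (fun _ _ => (0 : ℂ)) := by
          refine Finsupp.sum_congr (fun j _ => ?_)
          rw [Finsupp.smul_apply]
          cases j with
          | d i => rw [actB_d_apply, smul_eq_mul]; push_cast; ring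
          | i i => rw [actB_i_apply, mul_zero, smul_zero]
          | c => show _ • (0 : ℤ →₀ ℂ) (-n) = 0; simp
          | cd => show _ • (0 : ℤ →₀ ℂ) (-n) = 0; simp
          | ci => show _ • (0 : ℤ →₀ ℂ) (-n) = 0; simp
        rw [h2, Finsupp.sum_fun_zero]
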